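/- Equality case of the Hölder-type inequality: with the notation of the previous statement, if A = S^((n-1)/n) · B^(1/n) and A > 0, then r is μ-almost everywhere constant. -/

import Mathlib

open MeasureTheory
open scoped NNReal ENNReal

theorem stmt_6 {X : Type*} [MeasurableSpace X] (μ : Measure X) [IsFiniteMeasure μ]
    (n : ℕ) (hn : 2 ≤ n) (r : X → ℝ) (hr : Measurable r)
    (hr01 : ∀ x, r x ∈ Set.Ioo (0:ℝ) 1)
    (hA : Integrable (fun x => (1 - r x) ^ ((1:ℝ)/((n:ℝ)+1)) * (r x) ^ ((n:ℝ)/((n:ℝ)+1))) μ)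
    (hB : Integrable (fun x => (r x) ^ ((1:ℝ)/((n:ℝ)+1)) * (1 - r x) ^ ((n:ℝ)/((n:ℝ)+1))) μ)
    (hS : Integrable r μ)
    (hpos : 0 < ∫ x, (1 - r x) ^ ((1:ℝ)/((n:ℝ)+1)) * (r x) ^ ((n:ℝ)/((n:ℝ)+1)) ∂μ)
    (heq : (∫ x, (1 - r x) ^ ((1:ℝ)/((n:ℝ)+1)) * (r x) ^ ((n:ℝ)/((n:ℝ)+1)) ∂μ)
      = (∫ x, r x ∂μ) ^ (((n:ℝ) - 1)/(n:ℝ)) *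
        (∫ x, (r x) ^ ((1:ℝ)/((n:ℝ)+1)) * (1 - r x) ^ ((n:ℝ)/((n:ℝ)+1)) ∂μ) ^ ((1:ℝ)/(n:ℝ))) :
    ∃ c : ℝ, ∀ᵐ x ∂μ, r x = c := by
  classical
  have hn0 : (0:ℝ) < n := by positivity
  have hn0' : (n:ℝ) ≠ 0 := hn0.ne'
  have hn2 : (2:ℝ) ≤ (n:ℝ) := by exact_mod_cast hn
  have hn1 : (0:ℝ) < (n:ℝ) + 1 := by linarith
  set p : ℝ := (n:ℝ)/((n:ℝ)+1) with hp
  set q : ℝ := (1:ℝ)/((n:ℝ)+1) with hq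
  have hp0 : 0 < p := div_pos hn0 hn1
  have hq0 : 0 < q := div_pos one_pos hn1
  have hqp : q = 1 - p := by rw [hp, hq]; field_simp; ring
  have hpn : p * (1/(n:ℝ)) = q := by rw [hp, hq]; field_simp
  set g : X → ℝ := fun x => ((1 - r x) / r x) ^ p with hg
  have hrx : ∀ x, 0 < r x ∧ r x < 1 := fun x => ⟨(hr01 x).1, (hr01 x).2⟩
  have hgnn : ∀ x, 0 ≤ g x := fun x => Real.rpow_nonneg
    (div_nonneg (by linarith [(hrx x).2]) (hrx x).1.le) _
  -- pointwise identities
  have key2 : ∀ x, r x * g x = (r x) ^ q * (1 - r x) ^ p := by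
    intro x
    obtain ⟨h1, h2⟩ := hrx x
    have h3 : (0:ℝ) < 1 - r x := by linarith
    calc r x * g x = (r x / r x ^ p) * (1 - r x) ^ p := by
          simp only [hg]; rw [Real.div_rpow h3.le h1.le]; ring
      _ = r x ^ (1 - p) * (1 - r x) ^ p := by
          rw [Real.rpow_sub h1, Real.rpow_one]
      _ = (r x) ^ q * (1 - r x) ^ p := by rw [hqp]
  have key1 : ∀ x, r x * (g x) ^ ((1:ℝ)/(n:ℝ)) = (1 - r x) ^ q * (r x) ^ p := by
    intro x
    obtain ⟨h1, h2⟩ := hrx x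
    have h3 : (0:ℝ) < 1 - r x := by linarith
    have ht : (0:ℝ) ≤ (1 - r x) / r x := div_nonneg h3.le h1.le
    calc r x * (g x) ^ ((1:ℝ)/(n:ℝ))
        = r x * ((1 - r x) / r x) ^ q := by
          simp only [hg]; rw [← Real.rpow_mul ht, hpn]
      _ = (r x / r x ^ q) * (1 - r x) ^ q := by
          rw [Real.div_rpow h3.le h1.le]; ring
      _ = r x ^ (1 - q) * (1 - r x) ^ q := by
          rw [Real.rpow_sub h1, Real.rpow_one]
      _ = (1 - r x) ^ q * (r x) ^ p := by
          rw [show (1:ℝ) - q = p by rw [hqp]; ring]; ring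
  -- the three integrals
  set A : ℝ := ∫ x, (1 - r x) ^ ((1:ℝ)/((n:ℝ)+1)) * (r x) ^ ((n:ℝ)/((n:ℝ)+1)) ∂μ with hAdef
  set B : ℝ := ∫ x, (r x) ^ ((1:ℝ)/((n:ℝ)+1)) * (1 - r x) ^ ((n:ℝ)/((n:ℝ)+1)) ∂μ with hBdef
  set S : ℝ := ∫ x, r x ∂μ with hSdef
  have hSnn : 0 ≤ S := integral_nonneg fun x => (hrx x).1.le
  have hBnn : 0 ≤ B := integral_nonneg fun x => mul_nonneg
    (Real.rpow_nonneg (hrx x).1.le _) (Real.rpow_nonneg (by linarith [(hrx x).2]) _)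
  have hSpos : 0 < S := by
    rcases hSnn.lt_or_eq with h | h
    · exact h
    · exfalso
      rw [← h, Real.zero_rpow (ne_of_gt (div_pos (by linarith) hn0))] at heq
      · simp at heq; linarith
  have hBpos : 0 < B := by
    rcases hBnn.lt_or_eq with h | h
    · exact h
    · exfalso
      rw [← h, Real.zero_rpow (ne_of_gt (div_pos one_pos hn0)), mul_zero] at heq
      linarith
  -- the measure ν
  set w : X → ℝ≥0 := fun x => Real.toNNReal (r x) with hw
  have hwm : Measurable w := hr.real_toNNReal
  set ν : Measure X := μ.withDensity (fun x => (w x : ℝ≥0∞)) with hν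
  have hcoe : ∀ x, ((w x : ℝ≥0) : ℝ) = r x := fun x => Real.coe_toNNReal _ (hrx x).1.le
  have hofReal : (fun x => ((w x : ℝ≥0) : ℝ≥0∞)) = fun x => ENNReal.ofReal (r x) := rfl
  have hlint : ∫⁻ x, ((w x : ℝ≥0) : ℝ≥0∞) ∂μ = ENNReal.ofReal S := by
    rw [hofReal, ← ofReal_integral_eq_lintegral_ofReal hS
      (Filter.Eventually.of_forall fun x => (hrx x).1.le)]
  have : IsFiniteMeasure ν := isFiniteMeasure_withDensity (by rw [hlint]; exact ENNReal.ofReal_ne_top)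
  have hνuniv : (ν Set.univ).toReal = S := by
    rw [hν, withDensity_apply _ MeasurableSet.univ, setLIntegral_univ, hlint,
      ENNReal.toReal_ofReal hSnn]
  -- integral transfers
  have hintg : ∫ x, g x ∂ν = B := by
    rw [hν, integral_withDensity_eq_integral_smul hwm]
    rw [hBdef]
    congr 1; ext x
    rw [NNReal.smul_def, smul_eq_mul, hcoe, key2 x]
  have hintfg : ∫ x, (g x) ^ ((1:ℝ)/(n:ℝ)) ∂ν = A := by
    rw [hν, integral_withDensity_eq_integral_smul hwm]
    rw [hAdef]
    congr 1; ext x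
    rw [NNReal.smul_def, smul_eq_mul, hcoe, key1 x]
  -- integrability transfers
  have hwlt : ∀ᵐ x ∂μ, ((w x : ℝ≥0) : ℝ≥0∞) < ⊤ :=
    Filter.Eventually.of_forall fun x => ENNReal.coe_lt_top
  have hwm' : Measurable fun x => ((w x : ℝ≥0) : ℝ≥0∞) := hwm.coe_nnreal_ennreal
  have hgm : Measurable g := by
    have hc : Continuous fun y : ℝ => y ^ p := continuous_iff_continuousAt.mpr
      fun y => Real.continuousAt_rpow_const y p (Or.inr hp0.le)
    exact hc.measurable.comp ((hr.const_sub 1).div hr)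
  have hintg' : Integrable g ν := by
    rw [hν, integrable_withDensity_iff hwm' hwlt]
    have : (fun x => g x * ((w x : ℝ≥0∞)).toReal)
        = fun x => (r x) ^ q * (1 - r x) ^ p := by
      ext x; rw [ENNReal.coe_toReal, hcoe, mul_comm, key2 x]
    rw [this]; exact hB
  have hintfg' : Integrable (fun x => (g x) ^ ((1:ℝ)/(n:ℝ))) ν := by
    rw [hν, integrable_withDensity_iff hwm' hwlt]
    have : (fun x => (g x) ^ ((1:ℝ)/(n:ℝ)) * ((w x : ℝ≥0∞)).toReal)
        = fun x => (1 - r x) ^ q * (r x) ^ p := by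
      ext x; rw [ENNReal.coe_toReal, hcoe, mul_comm, key1 x]
    rw [this]; exact hA
  -- Jensen equality
  have havg_g : ⨍ x, g x ∂ν = B / S := by
    rw [average_eq, measureReal_def, hνuniv, hintg, smul_eq_mul, div_eq_inv_mul]
  have havg_fg : ⨍ x, (g x) ^ ((1:ℝ)/(n:ℝ)) ∂ν = A / S := by
    rw [average_eq, measureReal_def, hνuniv, hintfg, smul_eq_mul, div_eq_inv_mul]
  have heqavg : (B / S) ^ ((1:ℝ)/(n:ℝ)) = A / S := by
    rw [heq, Real.div_rpow hBnn hSnn,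
      div_eq_div_iff (Real.rpow_pos_of_pos hSpos _).ne' hSpos.ne']
    have hS1 : S ^ (((n:ℝ)-1)/(n:ℝ)) * S ^ ((1:ℝ)/(n:ℝ)) = S := by
      rw [← Real.rpow_add hSpos,
        show (((n:ℝ)-1)/(n:ℝ) + 1/(n:ℝ)) = 1 by field_simp; ring, Real.rpow_one]
    linear_combination (-(B ^ ((1:ℝ)/(n:ℝ)))) * hS1
  have hconc : StrictConcaveOn ℝ (Set.Ici (0:ℝ)) (fun y : ℝ => y ^ ((1:ℝ)/(n:ℝ))) :=
    Real.strictConcaveOn_rpow (by positivity) (by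
      rw [div_lt_one hn0]; exact_mod_cast by omega)
  have hcont : ContinuousOn (fun y : ℝ => y ^ ((1:ℝ)/(n:ℝ))) (Set.Ici (0:ℝ)) :=
    fun y _ => (Real.continuousAt_rpow_const y _ (Or.inr (by positivity))).continuousWithinAt
  have := hconc.ae_eq_const_or_lt_map_average hcont isClosed_Ici
    (Filter.Eventually.of_forall fun x => hgnn x) hintg' hintfg'
  rcases this with h | h
  · -- g is a.e. constant wrt ν
    set c : ℝ := ⨍ x, g x ∂ν with hc
    have hgc : ∀ᵐ x ∂μ, g x = c := by
      have h' := (ae_withDensity_iff (p := fun x => g x = c) hwm').mp h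
      filter_upwards [h'] with x hx
      refine hx ?_
      simp only [ne_eq, ENNReal.coe_eq_zero, hw, Real.toNNReal_eq_zero, not_le]
      exact (hrx x).1
    refine ⟨(1 + c ^ p⁻¹)⁻¹, ?_⟩
    filter_upwards [hgc] with x hx
    obtain ⟨h1, h2⟩ := hrx x
    have h3 : (0:ℝ) < 1 - r x := by linarith
    have ht : (0:ℝ) ≤ (1 - r x) / r x := div_nonneg h3.le h1.le
    have hcc : (1 - r x) / r x = c ^ p⁻¹ := by
      rw [← hx]; simp only [hg]
      exact (Real.rpow_rpow_inv ht hp0.ne').symm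
    rw [← hcc]
    field_simp; ring
  · exfalso
    rw [havg_g, havg_fg, heqavg] at h
    exact lt_irrefl _ h
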